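/- Let γ : I → 𝕃⁴ be a time-like curve parametrized by proper time with a Bishop frame (T,B₁,B₂,B₃) with coefficient functions b₁,b₂,b₃. (i) For every Bishop frame (T,B̂₁,B̂₂,B̂₃) of γ with coefficient functions b̂₁,b̂₂,b̂₃, there exists a constant matrix Q = (q_{ij}) ∈ O(3) such that B̂ᵢ = Σⱼ q_{ij}Bⱼ and b̂ᵢ = Σⱼ q_{ij}bⱼ for i = 1,2,3. (ii) Conversely, for every constant Q = (q_{ij}) ∈ O(3), the maps B̂ᵢ := Σⱼ q_{ij}Bⱼ together with T form a Bishop frame of γ with coefficient functions b̂ᵢ = Σⱼ q_{ij}bⱼ. -/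

import Mathlib

open Set Real

noncomputable section

/-- The Minkowski form on `ℝ⁴ = 𝕃⁴`: `⟨x,y⟩ = -x₀y₀ + x₁y₁ + x₂y₂ + x₃y₃`. -/
def mink (x y : Fin 4 → ℝ) : ℝ :=
  -(x 0 * y 0) + x 1 * y 1 + x 2 * y 2 + x 3 * y 3

/-- `(T, Z₁, Z₂, Z₃)` is an orthonormal frame along a time-like curve with tangent `T`:
the `Zᵢ` are smooth on `I`, pairwise orthonormal (space-like) and orthogonal to `T`. -/
def OrthFrame (I : Set ℝ) (T Z₁ Z₂ Z₃ : ℝ → Fin 4 → ℝ) : Prop :=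
  ContDiffOn ℝ (⊤ : ℕ∞) Z₁ I ∧ ContDiffOn ℝ (⊤ : ℕ∞) Z₂ I ∧ ContDiffOn ℝ (⊤ : ℕ∞) Z₃ I ∧
  ∀ s ∈ I,
    mink (Z₁ s) (Z₁ s) = 1 ∧ mink (Z₂ s) (Z₂ s) = 1 ∧ mink (Z₃ s) (Z₃ s) = 1 ∧
    mink (Z₁ s) (Z₂ s) = 0 ∧ mink (Z₁ s) (Z₃ s) = 0 ∧ mink (Z₂ s) (Z₃ s) = 0 ∧
    mink (T s) (Z₁ s) = 0 ∧ mink (T s) (Z₂ s) = 0 ∧ mink (T s) (Z₃ s) = 0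

/-- `γ` is a smooth time-like curve parametrized by proper time on `I`. -/
def ProperTime (I : Set ℝ) (γ : ℝ → Fin 4 → ℝ) : Prop :=
  ContDiffOn ℝ (⊤ : ℕ∞) γ I ∧ ∀ s ∈ I, mink (deriv γ s) (deriv γ s) = -1

/-- Three smooth real functions on `I`. -/
def Smooth3 (I : Set ℝ) (x₁ x₂ x₃ : ℝ → ℝ) : Prop :=
  ContDiffOn ℝ (⊤ : ℕ∞) x₁ I ∧ ContDiffOn ℝ (⊤ : ℕ∞) x₂ I ∧ ContDiffOn ℝ (⊤ : ℕ∞) x₃ I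

/-- `γ` admits a generalized Bishop frame of type B. -/
def AdmitsB (I : Set ℝ) (γ : ℝ → Fin 4 → ℝ) : Prop :=
  ∃ (Z₁ Z₂ Z₃ : ℝ → Fin 4 → ℝ) (x₁ x₂ x₃ : ℝ → ℝ),
    OrthFrame I (deriv γ) Z₁ Z₂ Z₃ ∧ Smooth3 I x₁ x₂ x₃ ∧
    ∀ s ∈ I,
      deriv (deriv γ) s = x₁ s • Z₁ s + x₂ s • Z₂ s + x₃ s • Z₃ s ∧
      deriv Z₁ s = x₁ s • deriv γ s ∧
      deriv Z₂ s = x₂ s • deriv γ s ∧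
      deriv Z₃ s = x₃ s • deriv γ s

/-- `γ` admits a generalized Bishop frame of type C. -/
def AdmitsC (I : Set ℝ) (γ : ℝ → Fin 4 → ℝ) : Prop :=
  ∃ (Z₁ Z₂ Z₃ : ℝ → Fin 4 → ℝ) (x₁ x₂ x₃ : ℝ → ℝ),
    OrthFrame I (deriv γ) Z₁ Z₂ Z₃ ∧ Smooth3 I x₁ x₂ x₃ ∧
    ∀ s ∈ I,
      deriv (deriv γ) s = x₁ s • Z₁ s + x₂ s • Z₂ s ∧
      deriv Z₁ s = x₁ s • deriv γ s + x₃ s • Z₃ s ∧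
      deriv Z₂ s = x₂ s • deriv γ s ∧
      deriv Z₃ s = (-(x₃ s)) • Z₁ s

/-- `γ` admits a generalized Bishop frame of type D. -/
def AdmitsD (I : Set ℝ) (γ : ℝ → Fin 4 → ℝ) : Prop :=
  ∃ (Z₁ Z₂ Z₃ : ℝ → Fin 4 → ℝ) (x₁ x₂ x₃ : ℝ → ℝ),
    OrthFrame I (deriv γ) Z₁ Z₂ Z₃ ∧ Smooth3 I x₁ x₂ x₃ ∧
    ∀ s ∈ I,
      deriv (deriv γ) s = x₁ s • Z₁ s ∧
      deriv Z₁ s = x₁ s • deriv γ s + x₂ s • Z₂ s + x₃ s • Z₃ s ∧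
      deriv Z₂ s = (-(x₂ s)) • Z₁ s ∧
      deriv Z₃ s = (-(x₃ s)) • Z₁ s

/-- `γ` admits a generalized Bishop frame of type F. -/
def AdmitsF (I : Set ℝ) (γ : ℝ → Fin 4 → ℝ) : Prop :=
  ∃ (Z₁ Z₂ Z₃ : ℝ → Fin 4 → ℝ) (x₁ x₂ x₃ : ℝ → ℝ),
    OrthFrame I (deriv γ) Z₁ Z₂ Z₃ ∧ Smooth3 I x₁ x₂ x₃ ∧
    ∀ s ∈ I,
      deriv (deriv γ) s = x₁ s • Z₁ s ∧
      deriv Z₁ s = x₁ s • deriv γ s + x₂ s • Z₂ s ∧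
      deriv Z₂ s = (-(x₂ s)) • Z₁ s + x₃ s • Z₃ s ∧
      deriv Z₃ s = (-(x₃ s)) • Z₂ s

/-- A Bishop frame (indexed form): `(T, B 0, B 1, B 2)` is an orthonormal frame along `γ`
with coefficient functions `b i`, i.e. `T' = Σᵢ bᵢ Bᵢ` and `Bᵢ' = bᵢ T`. -/
def IsBishopFrame (I : Set ℝ) (γ : ℝ → Fin 4 → ℝ)
    (B : Fin 3 → ℝ → Fin 4 → ℝ) (b : Fin 3 → ℝ → ℝ) : Prop :=
  (∀ i, ContDiffOn ℝ (⊤ : ℕ∞) (B i) I) ∧ (∀ i, ContDiffOn ℝ (⊤ : ℕ∞) (b i) I) ∧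
  (∀ s ∈ I, ∀ i j, mink (B i s) (B j s) = if i = j then 1 else 0) ∧
  (∀ s ∈ I, ∀ i, mink (deriv γ s) (B i s) = 0) ∧
  (∀ s ∈ I, deriv (deriv γ) s = ∑ i, b i s • B i s) ∧
  (∀ s ∈ I, ∀ i, deriv (B i) s = b i s • deriv γ s)

section AuxBishop

open Matrix Finset

lemma aux_mink_comm (x y : Fin 4 → ℝ) : mink x y = mink y x := by simp [mink]; ring

lemma aux_mink_smul_left (c : ℝ) (x y : Fin 4 → ℝ) : mink (c • x) y = c * mink x y := by
  simp [mink]; ring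

lemma aux_mink_smul_right (c : ℝ) (x y : Fin 4 → ℝ) : mink x (c • y) = c * mink x y := by
  simp [mink]; ring

lemma aux_mink_sub_left (x x' y : Fin 4 → ℝ) : mink (x - x') y = mink x y - mink x' y := by
  simp [mink]; ring

lemma aux_mink_sum_left {n : ℕ} (f : Fin n → Fin 4 → ℝ) (y : Fin 4 → ℝ) :
    mink (∑ j, f j) y = ∑ j, mink (f j) y := by
  simp [mink, Finset.sum_apply, Finset.sum_mul, Finset.sum_add_distrib, Finset.sum_neg_distrib]

lemma aux_mink_sum_right {n : ℕ} (x : Fin 4 → ℝ) (f : Fin n → Fin 4 → ℝ) :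
    mink x (∑ j, f j) = ∑ j, mink x (f j) := by
  rw [aux_mink_comm, aux_mink_sum_left]; simp [aux_mink_comm]

lemma aux_mink_sub_right (x y y' : Fin 4 → ℝ) : mink x (y - y') = mink x y - mink x y' := by
  simp [mink]; ring

lemma aux_hasDerivAt_mink {f g : ℝ → Fin 4 → ℝ} {f' g' : Fin 4 → ℝ} {s : ℝ}
    (hf : HasDerivAt f f' s) (hg : HasDerivAt g g' s) :
    HasDerivAt (fun t => mink (f t) (g t)) (mink f' (g s) + mink (f s) g') s := by
  have hfk := hasDerivAt_pi.1 hf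
  have hgk := hasDerivAt_pi.1 hg
  have h : HasDerivAt (fun t => -(f t 0 * g t 0) + f t 1 * g t 1 + f t 2 * g t 2 + f t 3 * g t 3)
      (-(f' 0 * g s 0 + f s 0 * g' 0) + (f' 1 * g s 1 + f s 1 * g' 1)
        + (f' 2 * g s 2 + f s 2 * g' 2) + (f' 3 * g s 3 + f s 3 * g' 3)) s :=
    ((((hfk 0).mul (hgk 0)).neg.add ((hfk 1).mul (hgk 1))).add ((hfk 2).mul (hgk 2))).add
      ((hfk 3).mul (hgk 3))
  convert h using 1
  · rfl
  simp only [mink]; ring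

lemma aux_mink_span (T B0 B1 B2 v : Fin 4 → ℝ)
    (hTT : mink T T = -1) (h00 : mink B0 B0 = 1) (h11 : mink B1 B1 = 1) (h22 : mink B2 B2 = 1)
    (h01 : mink B0 B1 = 0) (h02 : mink B0 B2 = 0) (h12 : mink B1 B2 = 0)
    (hT0 : mink T B0 = 0) (hT1 : mink T B1 = 0) (hT2 : mink T B2 = 0)
    (hvT : mink T v = 0) (hv0 : mink B0 v = 0) (hv1 : mink B1 v = 0) (hv2 : mink B2 v = 0) :
    v = 0 := by
  have h10 : mink B1 B0 = 0 := by rw [aux_mink_comm]; exact h01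
  have h20 : mink B2 B0 = 0 := by rw [aux_mink_comm]; exact h02
  have h21 : mink B2 B1 = 0 := by rw [aux_mink_comm]; exact h12
  have h0T : mink B0 T = 0 := by rw [aux_mink_comm]; exact hT0
  have h1T : mink B1 T = 0 := by rw [aux_mink_comm]; exact hT1
  have h2T : mink B2 T = 0 := by rw [aux_mink_comm]; exact hT2
  have key : ∀ i j, (Matrix.of ![T, B0, B1, B2] * Matrix.diagonal ![(-1:ℝ), 1, 1, 1]
      * (Matrix.of ![T, B0, B1, B2])ᵀ) i j
      = mink (Matrix.of ![T, B0, B1, B2] i) (Matrix.of ![T, B0, B1, B2] j) := by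
    intro i j
    rw [Matrix.mul_apply]
    simp only [Matrix.mul_diagonal, Matrix.transpose_apply, Fin.sum_univ_four, mink]
    norm_num [Matrix.cons_val_two, Matrix.cons_val_three, Matrix.vecHead, Matrix.vecTail]
  have hη2 : (Matrix.diagonal ![(-1:ℝ), 1, 1, 1]) * (Matrix.diagonal ![(-1:ℝ), 1, 1, 1]) = 1 := by
    rw [Matrix.diagonal_mul_diagonal]
    ext i j
    rw [Matrix.diagonal_apply, Matrix.one_apply]
    fin_cases i <;> fin_cases j <;> norm_num
  have hAη : Matrix.of ![T, B0, B1, B2] * Matrix.diagonal ![(-1:ℝ), 1, 1, 1]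
      * (Matrix.of ![T, B0, B1, B2])ᵀ = Matrix.diagonal ![(-1:ℝ), 1, 1, 1] := by
    ext i j
    rw [key]
    fin_cases i <;> fin_cases j <;> norm_num [Matrix.diagonal_apply] <;>
      first
      | exact hTT | exact h00 | exact h11 | exact h22 | exact h01 | exact h02 | exact h12
      | exact h10 | exact h20 | exact h21 | exact hT0 | exact hT1 | exact hT2 | exact h0T
      | exact h1T | exact h2T
  have hleft : (Matrix.diagonal ![(-1:ℝ), 1, 1, 1] * (Matrix.of ![T, B0, B1, B2])ᵀ
      * Matrix.diagonal ![(-1:ℝ), 1, 1, 1]) * Matrix.of ![T, B0, B1, B2] = 1 :=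
    mul_eq_one_comm.mp (by
      calc Matrix.of ![T, B0, B1, B2] * (Matrix.diagonal ![(-1:ℝ), 1, 1, 1]
            * (Matrix.of ![T, B0, B1, B2])ᵀ * Matrix.diagonal ![(-1:ℝ), 1, 1, 1])
          = (Matrix.of ![T, B0, B1, B2] * Matrix.diagonal ![(-1:ℝ), 1, 1, 1]
            * (Matrix.of ![T, B0, B1, B2])ᵀ) * Matrix.diagonal ![(-1:ℝ), 1, 1, 1] := by
            noncomm_ring
      _ = 1 := by rw [hAη, hη2])
  have hw : Matrix.of ![T, B0, B1, B2] *ᵥ (Matrix.diagonal ![(-1:ℝ), 1, 1, 1] *ᵥ v) = 0 := by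
    funext i
    have hdv : (Matrix.diagonal ![(-1:ℝ), 1, 1, 1] *ᵥ v) = ![-v 0, v 1, v 2, v 3] := by
      funext k
      rw [Matrix.mulVec_diagonal]
      fin_cases k <;> simp
    have hme : (Matrix.of ![T, B0, B1, B2] *ᵥ (Matrix.diagonal ![(-1:ℝ), 1, 1, 1] *ᵥ v)) i
        = mink (Matrix.of ![T, B0, B1, B2] i) v := by
      rw [hdv]
      simp only [Matrix.mulVec, dotProduct, Fin.sum_univ_four, mink]
      norm_num [Matrix.cons_val_two, Matrix.cons_val_three, Matrix.vecHead, Matrix.vecTail]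
      try ring
    rw [hme]
    fin_cases i <;>
      first | exact hvT | exact hv0 | exact hv1 | exact hv2
  have hηv : Matrix.diagonal ![(-1:ℝ), 1, 1, 1] *ᵥ v = 0 := by
    have h2 : (Matrix.diagonal ![(-1:ℝ), 1, 1, 1] * (Matrix.of ![T, B0, B1, B2])ᵀ
        * Matrix.diagonal ![(-1:ℝ), 1, 1, 1]) *ᵥ (Matrix.of ![T, B0, B1, B2]
        *ᵥ (Matrix.diagonal ![(-1:ℝ), 1, 1, 1] *ᵥ v)) = 0 := by
      rw [hw, Matrix.mulVec_zero]
    rwa [Matrix.mulVec_mulVec, hleft, Matrix.one_mulVec] at h2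
  have hv : v = Matrix.diagonal ![(-1:ℝ), 1, 1, 1]
      *ᵥ (Matrix.diagonal ![(-1:ℝ), 1, 1, 1] *ᵥ v) := by
    rw [Matrix.mulVec_mulVec, hη2, Matrix.one_mulVec]
  rw [hv, hηv, Matrix.mulVec_zero]

end AuxBishop

/-- (i) any two Bishop frames of a time-like curve differ by a constant
matrix `Q ∈ O(3)`, which also relates the coefficient functions; (ii) conversely, every
constant `Q ∈ O(3)` transforms a Bishop frame into a Bishop frame. -/
theorem stmt_17 (I : Set ℝ) (hIopen : IsOpen I) (hIconn : I.OrdConnected)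
    (γ : ℝ → Fin 4 → ℝ) (hγ : ProperTime I γ)
    (B : Fin 3 → ℝ → Fin 4 → ℝ) (b : Fin 3 → ℝ → ℝ)
    (hB : IsBishopFrame I γ B b) :
    (∀ (B' : Fin 3 → ℝ → Fin 4 → ℝ) (b' : Fin 3 → ℝ → ℝ),
      IsBishopFrame I γ B' b' →
      ∃ Q : Matrix (Fin 3) (Fin 3) ℝ, Q.transpose * Q = 1 ∧
        ∀ s ∈ I, ∀ i, B' i s = ∑ j, Q i j • B j s ∧ b' i s = ∑ j, Q i j * b j s) ∧
    (∀ Q : Matrix (Fin 3) (Fin 3) ℝ, Q.transpose * Q = 1 →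
      IsBishopFrame I γ (fun i s => ∑ j, Q i j • B j s) (fun i s => ∑ j, Q i j * b j s)) := by
  obtain ⟨hγs, hγT⟩ := hγ
  obtain ⟨hBs, hbs, hBo, hBTo, hdd, hdB⟩ := hB
  constructor
  · -- part (i)
    intro B' b' hB'
    obtain ⟨hB's, hb's, hB'o, hB'To, hdd', hdB'⟩ := hB'
    by_cases hne : I.Nonempty
    · obtain ⟨s₀, hs₀⟩ := hne
      -- the candidate matrix is constant on I
      have hconst : ∀ i j, ∀ s ∈ I, mink (B' i s) (B j s) = mink (B' i s₀) (B j s₀) := by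
        intro i j
        have hderiv : ∀ s ∈ I, HasDerivAt (fun t => mink (B' i t) (B j t)) 0 s := by
          intro s hs
          have hB'd : HasDerivAt (B' i) (b' i s • deriv γ s) s := by
            have h1 : DifferentiableAt ℝ (B' i) s :=
              ((hB's i).differentiableOn (by simp)).differentiableAt (hIopen.mem_nhds hs)
            have h2 := h1.hasDerivAt
            rwa [hdB' s hs i] at h2
          have hBd : HasDerivAt (B j) (b j s • deriv γ s) s := by
            have h1 : DifferentiableAt ℝ (B j) s :=
              ((hBs j).differentiableOn (by simp)).differentiableAt (hIopen.mem_nhds hs)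
            have h2 := h1.hasDerivAt
            rwa [hdB s hs j] at h2
          have h := aux_hasDerivAt_mink hB'd hBd
          rw [aux_mink_smul_left, aux_mink_smul_right, hBTo s hs j,
            aux_mink_comm (B' i s), hB'To s hs i] at h
          simpa using h
        intro s hs
        have hconv : Convex ℝ I := hIconn.convex
        have hdiff : DifferentiableOn ℝ (fun t => mink (B' i t) (B j t)) I := fun t ht =>
          (hderiv t ht).differentiableAt.differentiableWithinAt
        have hfd : ∀ t ∈ I, fderivWithin ℝ (fun t => mink (B' i t) (B j t)) I t = 0 := by
          intro t ht
          have h0 := (hderiv t ht).hasFDerivAt.hasFDerivWithinAt (s := I)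
          rw [h0.fderivWithin ((hIopen.uniqueDiffOn) t ht)]
          ext
          simp
        exact hconv.is_const_of_fderivWithin_eq_zero hdiff hfd hs hs₀
      set Q : Matrix (Fin 3) (Fin 3) ℝ := Matrix.of fun i j => mink (B' i s₀) (B j s₀) with hQdef
      have hQval : ∀ s ∈ I, ∀ i j, mink (B' i s) (B j s) = Q i j := by
        intro s hs i j
        rw [hQdef]
        exact hconst i j s hs
      -- expansion of B' in terms of B
      have hexp : ∀ s ∈ I, ∀ i, B' i s = ∑ j, Q i j • B j s := by
        intro s hs i
        have horth : ∀ k, mink (B k s) (B' i s - ∑ j, Q i j • B j s) = 0 := by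
          intro k
          rw [aux_mink_sub_right, aux_mink_sum_right]
          have h1 : mink (B k s) (B' i s) = Q i k := by
            rw [aux_mink_comm]; exact hQval s hs i k
          have h2 : (∑ j, mink (B k s) (Q i j • B j s)) = Q i k := by
            have : ∀ j : Fin 3, mink (B k s) (Q i j • B j s)
                = if k = j then Q i j else 0 := by
              intro j
              rw [aux_mink_smul_right, hBo s hs k j]
              by_cases h : k = j <;> simp [h]
            rw [Finset.sum_congr rfl fun j _ => this j]
            simp
          rw [h1, h2, sub_self]
        have hT : mink (deriv γ s) (B' i s - ∑ j, Q i j • B j s) = 0 := by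
          rw [aux_mink_sub_right, aux_mink_sum_right]
          have h2 : (∑ j, mink (deriv γ s) (Q i j • B j s)) = 0 := by
            have : ∀ j : Fin 3, mink (deriv γ s) (Q i j • B j s) = 0 := by
              intro j
              rw [aux_mink_smul_right, hBTo s hs j, mul_zero]
            rw [Finset.sum_congr rfl fun j _ => this j]
            simp
          rw [hB'To s hs i, h2, sub_self]
        have hz := aux_mink_span (deriv γ s) (B 0 s) (B 1 s) (B 2 s)
            (B' i s - ∑ j, Q i j • B j s) (hγT s hs)
            (by simpa using hBo s hs 0 0) (by simpa using hBo s hs 1 1)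
            (by simpa using hBo s hs 2 2) (by simpa using hBo s hs 0 1)
            (by simpa using hBo s hs 0 2) (by simpa using hBo s hs 1 2)
            (hBTo s hs 0) (hBTo s hs 1) (hBTo s hs 2)
            hT (horth 0) (horth 1) (horth 2)
        have := sub_eq_zero.mp hz
        exact this
      -- orthogonality of Q
      have hQQt : Q * Q.transpose = 1 := by
        ext i k
        rw [Matrix.mul_apply]
        have h1 : mink (B' i s₀) (B' k s₀) = ∑ j, Q i j * Q k j := by
          conv_lhs => rw [hexp s₀ hs₀ k, aux_mink_sum_right]
          refine Finset.sum_congr rfl fun j _ => ?_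
          rw [aux_mink_smul_right, hQval s₀ hs₀ i j]
          ring
        have h2 : mink (B' i s₀) (B' k s₀) = if i = k then 1 else 0 := hB'o s₀ hs₀ i k
        rw [Matrix.one_apply]
        rw [← h2, h1]
        refine Finset.sum_congr rfl fun j _ => ?_
        rw [Matrix.transpose_apply]
      have hQ1 : Q.transpose * Q = 1 := mul_eq_one_comm.mp hQQt
      -- coefficient relation
      have hbrel : ∀ s ∈ I, ∀ i, b' i s = ∑ j, Q i j * b j s := by
        intro s hs i
        have h1 : mink (B' i s) (deriv (deriv γ) s) = b' i s := by
          rw [hdd' s hs, aux_mink_sum_right]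
          have : ∀ k : Fin 3, mink (B' i s) (b' k s • B' k s)
              = if i = k then b' k s else 0 := by
            intro k
            rw [aux_mink_smul_right, hB'o s hs i k]
            by_cases h : i = k <;> simp [h]
          rw [Finset.sum_congr rfl fun k _ => this k]
          simp
        have h2 : mink (B' i s) (deriv (deriv γ) s) = ∑ j, Q i j * b j s := by
          rw [hdd s hs, aux_mink_sum_right]
          refine Finset.sum_congr rfl fun j _ => ?_
          rw [aux_mink_smul_right, hQval s hs i j]
          ring
        rw [← h1, h2]
      exact ⟨Q, hQ1, fun s hs i => ⟨hexp s hs i, hbrel s hs i⟩⟩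
    · rw [Set.not_nonempty_iff_eq_empty] at hne
      refine ⟨1, by simp, ?_⟩
      intro s hs
      rw [hne] at hs
      exact absurd hs (Set.notMem_empty s)
  · -- part (ii)
    intro Q hQ
    have hQQt : Q * Q.transpose = 1 := mul_eq_one_comm.mp hQ
    have hQcol : ∀ j l, (∑ i, Q i j * Q i l) = if j = l then 1 else 0 := by
      intro j l
      have := congrArg (fun M => M j l) hQ
      simpa [Matrix.mul_apply, Matrix.transpose_apply, Matrix.one_apply] using this
    have hQrow : ∀ i k, (∑ j, Q i j * Q k j) = if i = k then 1 else 0 := by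
      intro i k
      have := congrArg (fun M => M i k) hQQt
      simpa [Matrix.mul_apply, Matrix.transpose_apply, Matrix.one_apply] using this
    refine ⟨?_, ?_, ?_, ?_, ?_, ?_⟩
    · intro i
      exact ContDiffOn.sum fun j _ => (hBs j).const_smul (Q i j)
    · intro i
      exact ContDiffOn.sum fun j _ => (contDiffOn_const.mul (hbs j))
    · intro s hs i k
      have hstep : mink (∑ j, Q i j • B j s) (∑ l, Q k l • B l s)
          = ∑ j, Q i j * Q k j := by
        rw [aux_mink_sum_left]
        have : ∀ j : Fin 3, mink (Q i j • B j s) (∑ l, Q k l • B l s)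
            = Q i j * Q k j := by
          intro j
          rw [aux_mink_smul_left, aux_mink_sum_right]
          have h2 : (∑ l, mink (B j s) (Q k l • B l s)) = Q k j := by
            have : ∀ l : Fin 3, mink (B j s) (Q k l • B l s)
                = if j = l then Q k l else 0 := by
              intro l
              rw [aux_mink_smul_right, hBo s hs j l]
              by_cases h : j = l <;> simp [h]
            rw [Finset.sum_congr rfl fun l _ => this l]
            simp
          rw [h2]
        rw [Finset.sum_congr rfl fun j _ => this j]
      rw [hstep, hQrow i k]
    · intro s hs i
      rw [aux_mink_sum_right]
      have : ∀ j : Fin 3, mink (deriv γ s) (Q i j • B j s) = 0 := by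
        intro j
        rw [aux_mink_smul_right, hBTo s hs j, mul_zero]
      rw [Finset.sum_congr rfl fun j _ => this j]
      simp
    · intro s hs
      rw [hdd s hs]
      have hstep : ∀ i : Fin 3, (∑ j, Q i j * b j s) • (∑ l, Q i l • B l s)
          = ∑ l, ((∑ j, Q i j * b j s) * Q i l) • B l s := by
        intro i
        rw [Finset.smul_sum]
        refine Finset.sum_congr rfl fun l _ => ?_
        rw [smul_smul]
      rw [Finset.sum_congr rfl fun i _ => hstep i, Finset.sum_comm]
      have hcol : ∀ l : Fin 3, (∑ i, ((∑ j, Q i j * b j s) * Q i l) • B l s)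
          = b l s • B l s := by
        intro l
        rw [← Finset.sum_smul]
        congr 1
        have hswap : (∑ i, (∑ j, Q i j * b j s) * Q i l)
            = ∑ j, (∑ i, Q i j * Q i l) * b j s := by
          simp only [Finset.sum_mul]
          rw [Finset.sum_comm]
          refine Finset.sum_congr rfl fun j _ => ?_
          refine Finset.sum_congr rfl fun i _ => ?_
          ring
        rw [hswap]
        have : ∀ j : Fin 3, (∑ i, Q i j * Q i l) * b j s
            = if j = l then b j s else 0 := by
          intro j
          rw [hQcol j l]
          by_cases h : j = l <;> simp [h]
        rw [Finset.sum_congr rfl fun j _ => this j]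
        simp
      rw [Finset.sum_congr rfl fun l _ => hcol l]
    · intro s hs i
      show deriv (fun t => ∑ j, Q i j • B j t) s = (∑ j, Q i j * b j s) • deriv γ s
      have hD : HasDerivAt (fun t => ∑ j, Q i j • B j t)
          (∑ j, Q i j • (b j s • deriv γ s)) s := by
        refine HasDerivAt.fun_sum fun j _ => ?_
        have h1 : DifferentiableAt ℝ (B j) s :=
          ((hBs j).differentiableOn (by simp)).differentiableAt (hIopen.mem_nhds hs)
        have h2 := h1.hasDerivAt
        rw [hdB s hs j] at h2
        exact h2.const_smul (Q i j)
      rw [hD.deriv, Finset.sum_smul]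
      refine Finset.sum_congr rfl fun j _ => ?_
      rw [smul_smul]
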